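/- Let a, b be real numbers with 0 < a < b. If (v, w) : ℝ → ℝ² is a differentiable solution of the single FitzHugh–Nagumo system v′(t) = −v(t)³ + a v(t) − w(t), w′(t) = v(t) − b w(t), and (v, w) is periodic with some period T > 0, then (v, w) is constant. In other words, the planar FitzHugh–Nagumo system has no nonconstant periodic solutions when a < b. -/

import Mathlib

/-- the planar FitzHugh–Nagumo system has no nonconstant periodic
solutions when 0 < a < b. -/
theorem stmt_15 (a b : ℝ) (ha : 0 < a) (hab : a < b)
    (v w : ℝ → ℝ) (hv : Differentiable ℝ v) (hw : Differentiable ℝ w)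
    (heqv : ∀ t, deriv v t = -(v t)^3 + a * v t - w t)
    (heqw : ∀ t, deriv w t = v t - b * w t)
    (T : ℝ) (hT : 0 < T)
    (hpv : Function.Periodic v T) (hpw : Function.Periodic w T) :
    ∀ s t : ℝ, v s = v t ∧ w s = w t := by
  -- Lyapunov function E = (v-bw)^2/2 + (1-ab)w^2/2 + b^3 w^4/4
  set E : ℝ → ℝ := fun t =>
    (v t - b * w t)^2/2 + (1 - a*b)*((w t)^2/2) + b^3*((w t)^4/4) with hEdef
  have hEderiv : ∀ t, HasDerivAt E
      (-((b - a + ((v t)^2 + b*(v t)*(w t) + b^2*(w t)^2)) * (v t - b*w t)^2)) t := by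
    intro t
    have hvt : HasDerivAt v (-(v t)^3 + a * v t - w t) t := by
      have h := (hv t).hasDerivAt; rwa [heqv t] at h
    have hwt : HasDerivAt w (v t - b * w t) t := by
      have h := (hw t).hasDerivAt; rwa [heqw t] at h
    have h1 : HasDerivAt (fun t => (v t - b * w t)^2/2)
        (((2:ℕ) * (v t - b*w t)^1 * ((-(v t)^3 + a*v t - w t) - b*(v t - b*w t)))/2) t :=
      ((hvt.sub (hwt.const_mul b)).pow 2).div_const 2
    have h2 : HasDerivAt (fun t => (1 - a*b)*((w t)^2/2))
        ((1 - a*b) * (((2:ℕ) * (w t)^1 * (v t - b*w t))/2)) t :=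
      (((hwt.pow 2).div_const 2).const_mul (1 - a*b))
    have h3 : HasDerivAt (fun t => b^3*((w t)^4/4))
        (b^3 * (((4:ℕ) * (w t)^3 * (v t - b*w t))/4)) t :=
      (((hwt.pow 4).div_const 4).const_mul (b^3))
    have h := (h1.add h2).add h3
    refine h.congr_deriv ?_
    push_cast
    ring
  have hEdiff : Differentiable ℝ E := fun t => (hEderiv t).differentiableAt
  have hEle : ∀ t, deriv E t ≤ 0 := by
    intro t
    rw [(hEderiv t).deriv]
    have hq : 0 ≤ (v t)^2 + b*(v t)*(w t) + b^2*(w t)^2 := by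
      nlinarith [sq_nonneg (2*(v t) + b*(w t)), sq_nonneg (w t)]
    nlinarith [sq_nonneg (v t - b*(w t)), hq]
  have hanti : Antitone E := antitone_of_deriv_nonpos hEdiff hEle
  have hpE : Function.Periodic E T := by
    intro t; simp only [hEdef, hpv t, hpw t]
  have hpEn : ∀ (s : ℝ) (n : ℕ), E (s + n * T) = E s := by
    intro s n
    induction n with
    | zero => simp
    | succ k ih =>
      have : s + (k+1 : ℕ) * T = (s + k * T) + T := by push_cast; ring
      rw [this, hpE (s + k * T), ih]
  have hEconst : ∀ s t : ℝ, E s = E t := by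
    have key : ∀ s t : ℝ, E s ≤ E t := by
      intro s t
      obtain ⟨n, hn⟩ := exists_nat_ge ((t - s)/T)
      have hts : t ≤ s + n * T := by
        have := (div_le_iff₀ hT).mp hn
        linarith
      calc E s = E (s + n * T) := (hpEn s n).symm
        _ ≤ E t := hanti hts
    exact fun s t => le_antisymm (key s t) (key t s)
  have hEd0 : ∀ t, deriv E t = 0 := by
    have hEfun : E = fun _ => E 0 := funext fun t => hEconst t 0
    intro t; rw [hEfun]; simp
  have hy0 : ∀ t, v t - b * w t = 0 := by
    intro t
    have h := (hEderiv t).deriv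
    rw [hEd0 t] at h
    have hq : 0 ≤ (v t)^2 + b*(v t)*(w t) + b^2*(w t)^2 := by
      nlinarith [sq_nonneg (2*(v t) + b*(w t)), sq_nonneg (w t)]
    have hK : (0:ℝ) < b - a + ((v t)^2 + b*(v t)*(w t) + b^2*(w t)^2) := by linarith
    have hsq : (v t - b * w t)^2 = 0 := by
      rcases mul_eq_zero.mp (by linarith : (b - a + ((v t)^2 + b*(v t)*(w t) + b^2*(w t)^2)) * (v t - b*w t)^2 = 0) with h' | h'
      · exact absurd h' (ne_of_gt hK)
      · exact h'
    exact pow_eq_zero_iff (n := 2) (by norm_num) |>.mp hsq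
  have hw0 : ∀ t, deriv w t = 0 := by
    intro t; rw [heqw t]; exact hy0 t
  intro s t
  have hws : w s = w t := is_const_of_deriv_eq_zero hw hw0 s t
  refine ⟨?_, hws⟩
  have h1 := hy0 s; have h2 := hy0 t
  have : v s = b * w s := by linarith
  have h2' : v t = b * w t := by linarith
  rw [this, h2', hws]
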